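/- Let Y be a nonnegative random variable with mean μ and variance σ², both finite and positive, and let Y^s, defined on the same probability space as Y, have the Y-size bias distribution and satisfy Y^s ≥ Y almost surely. Set W = (Y − μ)/σ and W^s = (Y^s − μ)/σ. Then for every z ∈ ℝ and every a > 0, (μ/σ)·E[(W^s − W)·1{W^s − W ≤ a}·1{z ≤ W ≤ z + a}] ≤ a. -/

import Mathlib

open MeasureTheory ProbabilityTheory

/-- `Ys` has the `Y`-size bias distribution:
`E[Y g(Y)] = (E Y) · E[g(Ys)]` for every bounded measurable `g`. -/
def HasSizeBias {Ω : Type*} [MeasurableSpace Ω] (P : Measure Ω) (Y Ys : Ω → ℝ) : Prop :=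
  ∀ g : ℝ → ℝ, Measurable g → (∃ C, ∀ x, |g x| ≤ C) →
    ∫ ω, Y ω * g (Y ω) ∂P = (∫ ω, Y ω ∂P) * ∫ ω, g (Ys ω) ∂P

/-- Concentration inequality for monotone size bias couplings. -/
theorem size_bias_concentration {Ω : Type} [MeasurableSpace Ω]
    (P : Measure Ω) [IsProbabilityMeasure P]
    (Y Ys : Ω → ℝ) (hY : Measurable Y) (hYs : Measurable Ys)
    (hYnn : ∀ᵐ ω ∂P, 0 ≤ Y ω) (hY2 : MemLp Y 2 P)
    (μ : ℝ) (hμ : μ = ∫ ω, Y ω ∂P) (hμpos : 0 < μ)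
    (σ : ℝ) (hσpos : 0 < σ) (hσ2 : σ ^ 2 = variance Y P)
    (hsb : HasSizeBias P Y Ys)
    (hmono : ∀ᵐ ω ∂P, Y ω ≤ Ys ω) :
    ∀ z a : ℝ, 0 < a →
      μ / σ *
          ∫ ω, Set.indicator
            {ω' | (Ys ω' - μ) / σ - (Y ω' - μ) / σ ≤ a ∧
                  z ≤ (Y ω' - μ) / σ ∧ (Y ω' - μ) / σ ≤ z + a}
            (fun ω' => (Ys ω' - μ) / σ - (Y ω' - μ) / σ) ω ∂P
        ≤ a := by
  intro z a ha
  set b : ℝ := z * σ + μ with hb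
  set h : ℝ := a * σ with hh
  have hhpos : 0 < h := mul_pos ha hσpos
  set F : ℝ → ℝ := fun x => min (max (x - b) 0) (2 * h) with hFdef
  have hFmeas : Measurable F :=
    ((measurable_id.sub_const b).max measurable_const).min measurable_const
  have hF0 : ∀ x, 0 ≤ F x := fun x => le_min (le_max_right _ _) (by positivity)
  have hFle : ∀ x, F x ≤ 2 * h := fun x => min_le_right _ _
  have hFmono : Monotone F := by
    intro x y hxy
    exact min_le_min (max_le_max (by linarith) le_rfl) le_rfl
  -- integrability facts
  have hIntY : Integrable Y P := hY2.integrable one_le_two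
  have hIntFY : Integrable (fun ω => F (Y ω)) P := by
    refine Integrable.mono' (integrable_const (2 * h))
      (hFmeas.comp hY).aestronglyMeasurable (Filter.Eventually.of_forall fun ω => ?_)
    rw [Real.norm_eq_abs, abs_of_nonneg (hF0 _)]; exact hFle _
  have hIntFYs : Integrable (fun ω => F (Ys ω)) P := by
    refine Integrable.mono' (integrable_const (2 * h))
      (hFmeas.comp hYs).aestronglyMeasurable (Filter.Eventually.of_forall fun ω => ?_)
    rw [Real.norm_eq_abs, abs_of_nonneg (hF0 _)]; exact hFle _
  have hIntYFY : Integrable (fun ω => Y ω * F (Y ω)) P := by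
    refine Integrable.mono' (hIntY.norm.const_mul (2 * h))
      ((hY.mul (hFmeas.comp hY)).aestronglyMeasurable) (Filter.Eventually.of_forall fun ω => ?_)
    rw [Real.norm_eq_abs, abs_mul, abs_of_nonneg (hF0 _)]
    calc |Y ω| * F (Y ω) ≤ |Y ω| * (2 * h) := by
          exact mul_le_mul_of_nonneg_left (hFle _) (abs_nonneg _)
      _ = 2 * h * ‖Y ω‖ := by rw [Real.norm_eq_abs]; ring
  have hIntYmF : Integrable (fun ω => (Y ω - μ) * F (Y ω)) P := by
    have : (fun ω => (Y ω - μ) * F (Y ω))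
        = fun ω => Y ω * F (Y ω) - μ * F (Y ω) := by funext ω; ring
    rw [this]
    exact hIntYFY.sub (hIntFY.const_mul μ)
  -- size bias identity
  have hsbF : ∫ ω, Y ω * F (Y ω) ∂P = μ * ∫ ω, F (Ys ω) ∂P := by
    rw [hμ]
    exact hsb F hFmeas ⟨2 * h, fun x => by rw [abs_of_nonneg (hF0 x)]; exact hFle x⟩
  -- mean-absolute-deviation bound : ∫ |Y - μ| ≤ σ
  have hZ2 : MemLp (fun ω => |Y ω - μ|) 2 P := by
    have := (hY2.sub (memLp_const μ)).abs
    simpa [Pi.abs_def] using this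
  have hIntZ : Integrable (fun ω => |Y ω - μ|) P := hZ2.integrable one_le_two
  have hZsq : ∫ ω, |Y ω - μ| ^ 2 ∂P = σ ^ 2 := by
    have hveq := variance_eq_integral hY2.aemeasurable
    rw [hσ2, hveq, ← hμ]
    simp only [Pi.pow_apply, Pi.sub_apply, sq_abs]
  have hEZ : ∫ ω, |Y ω - μ| ∂P ≤ σ := by
    have hv := variance_nonneg (fun ω => |Y ω - μ|) P
    rw [variance_eq_sub hZ2] at hv
    have h1 : (∫ ω, |Y ω - μ| ∂P) ^ 2 ≤ σ ^ 2 := by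
      have : ∫ ω, (fun ω => |Y ω - μ|) ω ^ 2 ∂P = σ ^ 2 := hZsq
      simp only [Pi.pow_apply] at hv
      nlinarith [hv]
    have h2 : 0 ≤ ∫ ω, |Y ω - μ| ∂P := integral_nonneg fun ω => abs_nonneg _
    nlinarith
  have hEYm : ∫ ω, (Y ω - μ) ∂P = 0 := by
    rw [integral_sub hIntY (integrable_const μ)]
    simp [← hμ]
  have hIntPos : Integrable (fun ω => max (Y ω - μ) 0) P :=
    (hIntY.sub (integrable_const μ)).pos_part
  have hEpos : ∫ ω, max (Y ω - μ) 0 ∂P ≤ σ / 2 := by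
    have heq : ∀ ω, max (Y ω - μ) 0 = ((Y ω - μ) + |Y ω - μ|) / 2 := by
      intro ω; rcases le_total 0 (Y ω - μ) with h' | h'
      · rw [max_eq_left h', abs_of_nonneg h']; ring
      · rw [max_eq_right h', abs_of_nonpos h']; ring
    have hIntYm : Integrable (fun ω => Y ω - μ) P := hIntY.sub (integrable_const μ)
    calc ∫ ω, max (Y ω - μ) 0 ∂P = ∫ ω, ((Y ω - μ) + |Y ω - μ|) / 2 ∂P := by
          exact integral_congr_ae (Filter.Eventually.of_forall fun ω => heq ω)
      _ = ((∫ ω, (Y ω - μ) ∂P) + ∫ ω, |Y ω - μ| ∂P) / 2 := by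
          rw [integral_div, integral_add hIntYm hIntZ]
      _ ≤ σ / 2 := by rw [hEYm]; linarith
  -- key bound : ∫ (Y-μ) F(Y) ≤ h σ
  have hkey : ∫ ω, (Y ω - μ) * F (Y ω) ∂P ≤ h * σ := by
    have hpt : ∀ ω, (Y ω - μ) * F (Y ω) ≤ 2 * h * max (Y ω - μ) 0 := by
      intro ω
      rcases le_total 0 (Y ω - μ) with h' | h'
      · rw [max_eq_left h']
        calc (Y ω - μ) * F (Y ω) ≤ (Y ω - μ) * (2 * h) :=
              mul_le_mul_of_nonneg_left (hFle _) h'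
          _ = 2 * h * (Y ω - μ) := by ring
      · rw [max_eq_right h']
        have : (Y ω - μ) * F (Y ω) ≤ 0 := mul_nonpos_of_nonpos_of_nonneg h' (hF0 _)
        linarith
    calc ∫ ω, (Y ω - μ) * F (Y ω) ∂P ≤ ∫ ω, 2 * h * max (Y ω - μ) 0 ∂P :=
          integral_mono_ae hIntYmF (hIntPos.const_mul _)
            (Filter.Eventually.of_forall hpt)
      _ = 2 * h * ∫ ω, max (Y ω - μ) 0 ∂P := integral_const_mul _ _
      _ ≤ 2 * h * (σ / 2) := by
          exact mul_le_mul_of_nonneg_left hEpos (by positivity)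
      _ = h * σ := by ring
  -- the difference of means of F
  have hdiff : (∫ ω, F (Ys ω) ∂P) - ∫ ω, F (Y ω) ∂P
      = (∫ ω, (Y ω - μ) * F (Y ω) ∂P) / μ := by
    have : ∫ ω, (Y ω - μ) * F (Y ω) ∂P
        = (∫ ω, Y ω * F (Y ω) ∂P) - μ * ∫ ω, F (Y ω) ∂P := by
      have heq : (fun ω => (Y ω - μ) * F (Y ω))
          = fun ω => Y ω * F (Y ω) - μ * F (Y ω) := by funext ω; ring
      rw [heq, integral_sub hIntYFY (hIntFY.const_mul μ), integral_const_mul]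
    rw [this, hsbF]
    field_simp
  -- the indicator integrand
  set S : Set Ω := {ω' | (Ys ω' - μ) / σ - (Y ω' - μ) / σ ≤ a ∧
      z ≤ (Y ω' - μ) / σ ∧ (Y ω' - μ) / σ ≤ z + a} with hSdef
  have hfmeas : Measurable fun ω' => (Ys ω' - μ) / σ - (Y ω' - μ) / σ :=
    ((hYs.sub_const μ).div_const σ).sub ((hY.sub_const μ).div_const σ)
  have hgmeas : Measurable fun ω' => (Y ω' - μ) / σ := (hY.sub_const μ).div_const σ
  have hS : MeasurableSet S := by
    have h1 : MeasurableSet {ω' | (Ys ω' - μ) / σ - (Y ω' - μ) / σ ≤ a} :=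
      measurableSet_le hfmeas measurable_const
    have h2 : MeasurableSet {ω' | z ≤ (Y ω' - μ) / σ} :=
      measurableSet_le measurable_const hgmeas
    have h3 : MeasurableSet {ω' | (Y ω' - μ) / σ ≤ z + a} :=
      measurableSet_le hgmeas measurable_const
    exact h1.inter (h2.inter h3)
  -- pointwise comparison with (F(Ys) - F(Y))/σ
  have hptwise : ∀ᵐ ω ∂P,
      Set.indicator S (fun ω' => (Ys ω' - μ) / σ - (Y ω' - μ) / σ) ω
        ≤ (F (Ys ω) - F (Y ω)) / σ := by
    filter_upwards [hmono] with ω hm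
    by_cases hω : ω ∈ S
    · rw [Set.indicator_of_mem hω]
      obtain ⟨h1, h2, h3⟩ := hω
      have hYb : b ≤ Y ω := by
        rw [le_div_iff₀ hσpos] at h2; rw [hb]; linarith
      have hYbh : Y ω ≤ b + h := by
        rw [div_le_iff₀ hσpos] at h3; rw [hb, hh]; linarith
      have hYsY : Ys ω - Y ω ≤ h := by
        have : (Ys ω - Y ω) / σ ≤ a := by
          rw [div_sub_div_same] at h1
          have : Ys ω - μ - (Y ω - μ) = Ys ω - Y ω := by ring
          rwa [this] at h1
        rw [div_le_iff₀ hσpos] at this; rw [hh]; linarith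
      have hFY : F (Y ω) = Y ω - b := by
        simp only [hFdef]
        rw [max_eq_left (by linarith), min_eq_left (by linarith)]
      have hFYs : F (Ys ω) = Ys ω - b := by
        simp only [hFdef]
        rw [max_eq_left (by linarith), min_eq_left (by linarith)]
      rw [hFY, hFYs, div_sub_div_same]
      have heq2 : Ys ω - μ - (Y ω - μ) = Ys ω - b - (Y ω - b) := by ring
      rw [heq2]
    · rw [Set.indicator_of_notMem hω]
      have : 0 ≤ F (Ys ω) - F (Y ω) := sub_nonneg.2 (hFmono hm)
      exact div_nonneg this hσpos.le
  -- integrability of the indicator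
  have hIndInt : Integrable
      (fun ω => Set.indicator S (fun ω' => (Ys ω' - μ) / σ - (Y ω' - μ) / σ) ω) P := by
    refine Integrable.mono' (integrable_const a)
      ((hfmeas.indicator hS).aestronglyMeasurable) ?_
    filter_upwards [hmono] with ω hm
    rw [Real.norm_eq_abs]
    by_cases hω : ω ∈ S
    · rw [Set.indicator_of_mem hω]
      have h1 := hω.1
      have hge : 0 ≤ (Ys ω - μ) / σ - (Y ω - μ) / σ := by
        rw [div_sub_div_same]
        exact div_nonneg (by linarith) hσpos.le
      rw [abs_of_nonneg hge]; exact h1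
    · rw [Set.indicator_of_notMem hω]; simpa using le_of_lt ha
  -- put everything together
  have hmain : ∫ ω, Set.indicator S
      (fun ω' => (Ys ω' - μ) / σ - (Y ω' - μ) / σ) ω ∂P
      ≤ (h * σ) / (μ * σ) := by
    calc ∫ ω, Set.indicator S (fun ω' => (Ys ω' - μ) / σ - (Y ω' - μ) / σ) ω ∂P
        ≤ ∫ ω, (F (Ys ω) - F (Y ω)) / σ ∂P :=
          integral_mono_ae hIndInt (((hIntFYs.sub hIntFY).div_const σ)) hptwise
      _ = ((∫ ω, F (Ys ω) ∂P) - ∫ ω, F (Y ω) ∂P) / σ := by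
          rw [integral_div, integral_sub hIntFYs hIntFY]
      _ = ((∫ ω, (Y ω - μ) * F (Y ω) ∂P) / μ) / σ := by rw [hdiff]
      _ ≤ ((h * σ) / μ) / σ := by gcongr
      _ = (h * σ) / (μ * σ) := by rw [div_div]
  calc μ / σ * ∫ ω, Set.indicator S
        (fun ω' => (Ys ω' - μ) / σ - (Y ω' - μ) / σ) ω ∂P
      ≤ μ / σ * ((h * σ) / (μ * σ)) := by
        exact mul_le_mul_of_nonneg_left hmain (by positivity)
    _ = a := by rw [hh]; field_simp
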